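/- Binding-time correctness for IKC extended with natural number literals and multiplication: for every closed term · ⊢ f : Nat ⟶ □Nat of IKC^Nat and any two closed terms · ⊢ u₁, u₂ : Nat, it holds that app(f, u₁) ≈ app(f, u₂) in the equational theory of IKC^Nat. -/

import Mathlib

namespace IKC

/-- Types of IKC^Nat: base type ι, functions, box, natural numbers. -/
inductive Ty : Type
  | base : Ty
  | arr : Ty → Ty → Ty
  | box : Ty → Ty
  | nat : Ty

/-- Typing contexts: empty, extension by a type, extension by a lock 🔒. -/
inductive Cx : Type
  | nil : Cx
  | snoc : Cx → Ty → Cx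
  | lock : Cx → Cx

/-- IKC modal accessibility relation Δ ◁ Γ: Γ = Δ,🔒,Δ' with Δ' lock-free. -/
inductive Ext : Cx → Cx → Type
  | nil : Ext Γ (.lock Γ)
  | var : Ext Δ Γ → Ext Δ (.snoc Γ A)

/-- Order-preserving embeddings Γ ≤ Γ'. -/
inductive Ope : Cx → Cx → Type
  | base : Ope .nil .nil
  | drop : Ope Γ Γ' → Ope Γ (.snoc Γ' A)
  | keep : Ope Γ Γ' → Ope (.snoc Γ A) (.snoc Γ' A)
  | keepLock : Ope Γ Γ' → Ope (.lock Γ) (.lock Γ')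

/-- Identity OPE. -/
def idOpe : (Γ : Cx) → Ope Γ Γ
  | .nil => .base
  | .snoc Γ _ => .keep (idOpe Γ)
  | .lock Γ => .keepLock (idOpe Γ)

/-- De Bruijn variables (no rule through locks). -/
inductive Var : Cx → Ty → Type
  | zero : Var (.snoc Γ A) A
  | succ : Var Γ A → Var (.snoc Γ B) A

/-- Intrinsically-typed terms of IKC^Nat: IKC extended with natural number
literals lift(k) and a binary multiplication. -/
inductive Tm : Cx → Ty → Type
  | var : Var Γ A → Tm Γ A
  | lam : Tm (.snoc Γ A) B → Tm Γ (.arr A B)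
  | app : Tm Γ (.arr A B) → Tm Γ A → Tm Γ B
  | box : Tm (.lock Γ) A → Tm Γ (.box A)
  | unbox : Tm Δ (.box A) → Ext Δ Γ → Tm Γ A
  | lift : Nat → Tm Γ .nat
  | mul : Tm Γ .nat → Tm Γ .nat → Tm Γ .nat

/-- Factorization of e : Δ ◁ Γ along an OPE o : Γ ≤ Γ'. -/
def factor : {Δ Γ Γ' : Cx} → Ext Δ Γ → Ope Γ Γ' → (Δ' : Cx) × Ope Δ Δ' × Ext Δ' Γ'
  | _, _, _, e, .drop o =>
    let f := factor e o
    ⟨f.1, f.2.1, .var f.2.2⟩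
  | _, _, _, .nil, .keepLock o => ⟨_, o, .nil⟩
  | _, _, _, .var e, .keep o =>
    let f := factor e o
    ⟨f.1, f.2.1, .var f.2.2⟩

/-- An accessibility proof e : Δ ◁ Γ yields an OPE Δ,🔒 ≤ Γ. -/
def factorOpe : {Δ Γ : Cx} → Ext Δ Γ → Ope (.lock Δ) Γ
  | _, _, .nil => idOpe _
  | _, _, .var e => .drop (factorOpe e)

/-- Weakening of variables along an OPE. -/
def wkVar : {Γ Γ' : Cx} → Ope Γ Γ' → Var Γ A → Var Γ' A
  | _, _, .drop o, v => .succ (wkVar o v)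
  | _, _, .keep _, .zero => .zero
  | _, _, .keep o, .succ v => .succ (wkVar o v)

/-- Weakening (renaming) of terms along an OPE. -/
def wkTm : {Γ Γ' : Cx} → Ope Γ Γ' → Tm Γ A → Tm Γ' A
  | _, _, o, .var v => .var (wkVar o v)
  | _, _, o, .lam t => .lam (wkTm (.keep o) t)
  | _, _, o, .app t u => .app (wkTm o t) (wkTm o u)
  | _, _, o, .box t => .box (wkTm (.keepLock o) t)
  | _, _, o, .unbox t e => .unbox (wkTm (factor e o).2.1 t) (factor e o).2.2
  | _, _, _, .lift k => .lift k
  | _, _, o, .mul t u => .mul (wkTm o t) (wkTm o u)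

/-- Substitutions Γ ⊢ˢ s : Δ. -/
inductive Sub : Cx → Cx → Type
  | empty : Sub Γ .nil
  | snoc : Sub Γ Δ → Tm Γ A → Sub Γ (.snoc Δ A)
  | lock : Sub Θ Δ → Ext Θ Γ → Sub Γ (.lock Δ)

/-- Weakening of substitutions along an OPE. -/
def wkSub : {Γ Γ' Δ : Cx} → Ope Γ Γ' → Sub Γ Δ → Sub Γ' Δ
  | _, _, _, _, .empty => .empty
  | _, _, _, o, .snoc s t => .snoc (wkSub o s) (wkTm o t)
  | _, _, _, o, .lock s e => .lock (wkSub (factor e o).2.1 s) (factor e o).2.2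

/-- Identity substitution. -/
def idSub : (Γ : Cx) → Sub Γ Γ
  | .nil => .empty
  | .snoc Γ _ => .snoc (wkSub (.drop (idOpe Γ)) (idSub Γ)) (.var .zero)
  | .lock Γ => .lock (idSub Γ) .nil

/-- Action of a substitution on a variable. -/
def substVar : {Γ Δ : Cx} → Sub Γ Δ → Var Δ A → Tm Γ A
  | _, _, .snoc _ t, .zero => t
  | _, _, .snoc s _, .succ v => substVar s v

/-- Trimming a substitution along the modal accessibility relation. -/
def trimSub : {Γ Δ Θ : Cx} → Sub Γ Δ → Ext Θ Δ → (Θ' : Cx) × Sub Θ' Θ × Ext Θ' Γ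
  | _, _, _, .lock s e, .nil => ⟨_, s, e⟩
  | _, _, _, .snoc s _, .var e => trimSub s e

/-- Application of a substitution to a term. -/
def subst : {Γ Δ : Cx} → Sub Γ Δ → Tm Δ A → Tm Γ A
  | _, _, s, .var v => substVar s v
  | _, _, s, .lam t => .lam (subst (.snoc (wkSub (.drop (idOpe _)) s) (.var .zero)) t)
  | _, _, s, .app t u => .app (subst s t) (subst s u)
  | _, _, s, .box t => .box (subst (.lock s .nil) t)
  | _, _, s, .unbox t e => .unbox (subst (trimSub s e).2.1 t) (trimSub s e).2.2
  | _, _, _, .lift k => .lift k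
  | _, _, s, .mul t u => .mul (subst s t) (subst s u)

/-- The equational theory ≈ of IKC^Nat: the rules of IKC together with
arithmetic rules making multiplication with the literals a commutative monoid
with absorbing zero computing on literals. -/
inductive Conv : {Γ : Cx} → {A : Ty} → Tm Γ A → Tm Γ A → Prop
  | refl (t : Tm Γ A) : Conv t t
  | symm : Conv t u → Conv u t
  | trans : Conv t u → Conv u v → Conv t v
  | congLam : Conv t t' → Conv (.lam t) (.lam t')
  | congApp : Conv t t' → Conv u u' → Conv (.app t u) (.app t' u')
  | congBox : Conv t t' → Conv (.box t) (.box t')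
  | congUnbox {t t' : Tm Δ (.box A)} {e : Ext Δ Γ} :
      Conv t t' → Conv (.unbox t e) (.unbox t' e)
  | congMul : Conv t t' → Conv u u' → Conv (.mul t u) (.mul t' u')
  | betaFun (t : Tm (.snoc Γ A) B) (u : Tm Γ A) :
      Conv (.app (.lam t) u) (subst (.snoc (idSub Γ) u) t)
  | etaFun (t : Tm Γ (.arr A B)) :
      Conv t (.lam (.app (wkTm (.drop (idOpe Γ)) t) (.var .zero)))
  | betaBox (t : Tm (.lock Δ) A) (e : Ext Δ Γ) :
      Conv (.unbox (.box t) e) (wkTm (factorOpe e) t)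
  | etaBox (t : Tm Γ (.box A)) :
      Conv t (.box (.unbox t .nil))
  | liftMul {Γ : Cx} (k₁ k₂ : Nat) :
      Conv (Γ := Γ) (.mul (.lift k₁) (.lift k₂)) (.lift (k₁ * k₂))
  | zeroMul (t : Tm Γ .nat) : Conv (.mul (.lift 0) t) (.lift 0)
  | oneMul (t : Tm Γ .nat) : Conv t (.mul (.lift 1) t)
  | mulLiftComm (t : Tm Γ .nat) (k : Nat) : Conv (.mul t (.lift k)) (.mul (.lift k) t)
  | mulAssoc (t u v : Tm Γ .nat) : Conv (.mul (.mul t u) v) (.mul t (.mul u v))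
  | mulComm (t u : Tm Γ .nat) : Conv (.mul t u) (.mul u t)


/-! ### Auxiliary development -/

/-- Composition of OPEs. -/
def compOpe : {Γ Γ' Γ'' : Cx} → Ope Γ' Γ'' → Ope Γ Γ' → Ope Γ Γ''
  | _, _, _, .base, .base => .base
  | _, _, _, .drop o, o' => .drop (compOpe o o')
  | _, _, _, .keep o, .drop o' => .drop (compOpe o o')
  | _, _, _, .keep o, .keep o' => .keep (compOpe o o')
  | _, _, _, .keepLock o, .keepLock o' => .keepLock (compOpe o o')

theorem compOpe_idL : ∀ {Γ Γ' : Cx} (o : Ope Γ Γ'), compOpe (idOpe Γ') o = o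
  | _, _, .base => rfl
  | _, _, .drop o => by simp [idOpe, compOpe, compOpe_idL o]
  | _, _, .keep o => by simp [idOpe, compOpe, compOpe_idL o]
  | _, _, .keepLock o => by simp [idOpe, compOpe, compOpe_idL o]

theorem compOpe_idR : ∀ {Γ Γ' : Cx} (o : Ope Γ Γ'), compOpe o (idOpe Γ) = o
  | _, _, .base => rfl
  | _, _, .drop o => by simp [idOpe, compOpe, compOpe_idR o]
  | _, _, .keep o => by simp [idOpe, compOpe, compOpe_idR o]
  | _, _, .keepLock o => by simp [idOpe, compOpe, compOpe_idR o]

theorem wkVar_id : ∀ {Γ : Cx} {A : Ty} (v : Var Γ A), wkVar (idOpe Γ) v = v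
  | _, _, .zero => rfl
  | _, _, .succ v => by simp [idOpe, wkVar, wkVar_id v]

theorem wkVar_comp : ∀ {Γ Γ' Γ'' : Cx} {A : Ty} (o' : Ope Γ' Γ'') (o : Ope Γ Γ') (v : Var Γ A),
    wkVar (compOpe o' o) v = wkVar o' (wkVar o v)
  | _, _, _, _, .drop o', o, v => by simp [compOpe, wkVar, wkVar_comp o' o v]
  | _, _, _, _, .keep o', .drop o, v => by simp [compOpe, wkVar, wkVar_comp o' o v]
  | _, _, _, _, .keep o', .keep o, .zero => rfl
  | _, _, _, _, .keep o', .keep o, .succ v => by simp [compOpe, wkVar, wkVar_comp o' o v]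
  | _, _, _, _, .keepLock _, .keepLock _, v => nomatch v
  | _, _, _, _, .base, .base, v => nomatch v

theorem factor_drop {Δ Γ Γ' : Cx} {A : Ty} (e : Ext Δ Γ) (o : Ope Γ Γ') :
    factor e (.drop (A := A) o) = ⟨_, (factor e o).2.1, .var (factor e o).2.2⟩ := by
  cases e <;> rfl

theorem factor_keep {Δ Γ Γ' : Cx} {A : Ty} (e : Ext Δ Γ) (o : Ope Γ Γ') :
    factor (.var (A := A) e) (.keep o) = ⟨_, (factor e o).2.1, .var (factor e o).2.2⟩ := rfl

theorem factor_lock {Γ Γ' : Cx} (o : Ope Γ Γ') :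
    factor (.nil (Γ := Γ)) (.keepLock o) = ⟨Γ', o, .nil⟩ := rfl

theorem factor_id : ∀ {Δ Γ : Cx} (e : Ext Δ Γ), factor e (idOpe Γ) = ⟨Δ, idOpe Δ, e⟩
  | _, _, .nil => rfl
  | _, _, .var e => by
      simp only [idOpe]
      rw [factor_keep e (idOpe _), factor_id e]

theorem factor_comp : ∀ {Δ Γ Γ' Γ'' : Cx} (e : Ext Δ Γ) (o : Ope Γ Γ') (o' : Ope Γ' Γ''),
    factor e (compOpe o' o) =
      ⟨(factor (factor e o).2.2 o').1,
        compOpe (factor (factor e o).2.2 o').2.1 (factor e o).2.1,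
        (factor (factor e o).2.2 o').2.2⟩
  | _, _, _, _, e, o, .drop o' => by
      simp only [compOpe]
      rw [factor_drop e (compOpe o' o), factor_comp e o o', factor_drop (factor e o).2.2 o']
  | _, _, _, _, e, .drop o, .keep o' => by
      simp only [compOpe]
      rw [factor_drop e (compOpe o' o), factor_comp e o o', factor_drop e o,
        factor_keep (factor e o).2.2 o']
  | _, _, _, _, .var e, .keep o, .keep o' => by
      simp only [compOpe]
      rw [factor_keep e (compOpe o' o), factor_comp e o o', factor_keep e o,
        factor_keep (factor e o).2.2 o']
  | _, _, _, _, .nil, .keepLock o, .keepLock o' => by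
      simp only [compOpe]
      rw [factor_lock (compOpe o' o), factor_lock o, factor_lock o']
  | _, _, _, _, e, o, .base => by
      cases o; cases e

theorem wkTm_id : ∀ {Γ : Cx} {A : Ty} (t : Tm Γ A), wkTm (idOpe Γ) t = t
  | _, _, .var v => by simp [wkTm, wkVar_id]
  | _, _, .lam t => by simpa [wkTm, idOpe] using wkTm_id t
  | _, _, .app t u => by simp [wkTm, wkTm_id t, wkTm_id u]
  | _, _, .box t => by simpa [wkTm, idOpe] using wkTm_id t
  | _, _, .unbox t e => by
      simp only [wkTm]; rw [factor_id e, wkTm_id t]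
  | _, _, .lift k => by simp [wkTm]
  | _, _, .mul t u => by simp [wkTm, wkTm_id t, wkTm_id u]

theorem wkTm_comp : ∀ {Γ Γ' Γ'' : Cx} {A : Ty} (o' : Ope Γ' Γ'') (o : Ope Γ Γ') (t : Tm Γ A),
    wkTm (compOpe o' o) t = wkTm o' (wkTm o t)
  | _, _, _, _, o', o, .var v => by simp [wkTm, wkVar_comp]
  | _, _, _, _, o', o, .lam t => by
      simpa [wkTm, compOpe] using wkTm_comp (.keep o') (.keep o) t
  | _, _, _, _, o', o, .app t u => by simp [wkTm, wkTm_comp o' o t, wkTm_comp o' o u]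
  | _, _, _, _, o', o, .box t => by
      simpa [wkTm, compOpe] using wkTm_comp (.keepLock o') (.keepLock o) t
  | _, _, _, _, o', o, .unbox t e => by
      simp only [wkTm]
      rw [factor_comp e o o', wkTm_comp (factor (factor e o).2.2 o').2.1 (factor e o).2.1 t]
  | _, _, _, _, o', o, .lift k => by simp [wkTm]
  | _, _, _, _, o', o, .mul t u => by simp [wkTm, wkTm_comp o' o t, wkTm_comp o' o u]


theorem trimSub_nil {Γ Θ : Cx} {Γ' : Cx} (s : Sub Θ Γ) (e0 : Ext Θ Γ') :
    trimSub (.lock s e0) .nil = ⟨Θ, s, e0⟩ := rfl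

theorem trimSub_var {Γ Δ Θ : Cx} {A : Ty} (s : Sub Γ Δ) (t : Tm Γ A) (e : Ext Θ Δ) :
    trimSub (.snoc s t) (.var e) = trimSub s e := rfl

theorem wkSub_id : ∀ {Γ Δ : Cx} (s : Sub Γ Δ), wkSub (idOpe Γ) s = s
  | _, _, .empty => rfl
  | _, _, .snoc s t => by simp [wkSub, wkSub_id s, wkTm_id]
  | _, _, .lock s e => by simp only [wkSub]; rw [factor_id e, wkSub_id s]

theorem wkSub_comp : ∀ {Γ Γ' Γ'' Δ : Cx} (o' : Ope Γ' Γ'') (o : Ope Γ Γ') (s : Sub Γ Δ),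
    wkSub (compOpe o' o) s = wkSub o' (wkSub o s)
  | _, _, _, _, o', o, .empty => rfl
  | _, _, _, _, o', o, .snoc s t => by simp [wkSub, wkSub_comp o' o s, wkTm_comp]
  | _, _, _, _, o', o, .lock s e => by
      simp only [wkSub]
      rw [factor_comp e o o', wkSub_comp (factor (factor e o).2.2 o').2.1 (factor e o).2.1 s]

theorem substVar_wkSub : ∀ {Γ Γ' Δ : Cx} {A : Ty} (o : Ope Γ Γ') (s : Sub Γ Δ) (v : Var Δ A),
    substVar (wkSub o s) v = wkTm o (substVar s v)
  | _, _, _, _, _, .snoc _ _, .zero => rfl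
  | _, _, _, _, o, .snoc s _, .succ v => substVar_wkSub o s v

theorem trimSub_wkSub : ∀ {Γ Γ' Δ Θ : Cx} (o : Ope Γ Γ') (s : Sub Γ Δ) (e : Ext Θ Δ),
    trimSub (wkSub o s) e =
      ⟨_, wkSub (factor (trimSub s e).2.2 o).2.1 (trimSub s e).2.1,
        (factor (trimSub s e).2.2 o).2.2⟩
  | _, _, _, _, _, .lock _ _, .nil => rfl
  | _, _, _, _, o, .snoc s _, .var e => trimSub_wkSub o s e

theorem subst_wkSub : ∀ {Γ Γ' Δ : Cx} {A : Ty} (o : Ope Γ Γ') (s : Sub Γ Δ) (t : Tm Δ A),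
    subst (wkSub o s) t = wkTm o (subst s t)
  | _, _, _, _, o, s, .var v => by simp only [subst, wkTm]; exact substVar_wkSub o s v
  | _, _, _, _, o, s, .lam t => by
      simp only [subst, wkTm]
      rw [← subst_wkSub (.keep o) (.snoc (wkSub (.drop (idOpe _)) s) (.var .zero)) t]
      simp only [wkSub, wkTm, wkVar, ← wkSub_comp, compOpe, compOpe_idL, compOpe_idR]
  | _, _, _, _, o, s, .app t u => by
      simp [subst, wkTm, subst_wkSub o s t, subst_wkSub o s u]
  | _, _, _, _, o, s, .box t => by
      simp only [subst, wkTm]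
      rw [← subst_wkSub (.keepLock o) (.lock s .nil) t]
      simp only [wkSub, factor_lock]
  | _, _, _, _, o, s, .unbox t e => by
      simp only [subst, wkTm]
      rw [trimSub_wkSub o s e, subst_wkSub (factor (trimSub s e).2.2 o).2.1 (trimSub s e).2.1 t]
  | _, _, _, _, o, s, .lift k => by simp [subst, wkTm]
  | _, _, _, _, o, s, .mul t u => by
      simp [subst, wkTm, subst_wkSub o s t, subst_wkSub o s u]

/-- Composition of a substitution with an OPE on the right. -/
def trimOpe : {Δ Δ' Γ : Cx} → Ope Δ Δ' → Sub Γ Δ' → Sub Γ Δ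
  | _, _, _, .base, .empty => .empty
  | _, _, _, .drop o, .snoc s _ => trimOpe o s
  | _, _, _, .keep o, .snoc s t => .snoc (trimOpe o s) t
  | _, _, _, .keepLock o, .lock s e => .lock (trimOpe o s) e

theorem trimOpe_id : ∀ {Δ Γ : Cx} (s : Sub Γ Δ), trimOpe (idOpe Δ) s = s
  | _, _, .empty => rfl
  | _, _, .snoc s t => by simp [idOpe, trimOpe, trimOpe_id s]
  | _, _, .lock s e => by simp [idOpe, trimOpe, trimOpe_id s]

theorem substVar_trimOpe : ∀ {Δ Δ' Γ : Cx} {A : Ty} (o : Ope Δ Δ') (s : Sub Γ Δ') (v : Var Δ A),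
    substVar (trimOpe o s) v = substVar s (wkVar o v)
  | _, _, _, _, .drop o, .snoc s _, v => substVar_trimOpe o s v
  | _, _, _, _, .keep _, .snoc _ _, .zero => rfl
  | _, _, _, _, .keep o, .snoc s _, .succ v => substVar_trimOpe o s v

theorem trimSub_trimOpe : ∀ {Δ Δ' Γ Θ : Cx} (o : Ope Δ Δ') (s : Sub Γ Δ') (e : Ext Θ Δ),
    trimSub (trimOpe o s) e =
      ⟨_, trimOpe (factor e o).2.1 (trimSub s (factor e o).2.2).2.1,
        (trimSub s (factor e o).2.2).2.2⟩
  | _, _, _, _, .drop o, .snoc s t, e => by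
      rw [factor_drop e o]
      simp only [trimOpe]
      rw [trimSub_var s t (factor e o).2.2]
      exact trimSub_trimOpe o s e
  | _, _, _, _, .keep o, .snoc s t, .var e => by
      rw [factor_keep e o]
      simp only [trimOpe]
      rw [trimSub_var (trimOpe o s) t e, trimSub_var s t (factor e o).2.2]
      exact trimSub_trimOpe o s e
  | _, _, _, _, .keepLock o, .lock s e0, .nil => by
      rw [factor_lock o]
      simp only [trimOpe]
      rw [trimSub_nil (trimOpe o s) e0, trimSub_nil s e0]

theorem trimOpe_wkSub : ∀ {Δ Δ' Γ Γ' : Cx} (o : Ope Δ Δ') (o' : Ope Γ Γ') (s : Sub Γ Δ'),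
    trimOpe o (wkSub o' s) = wkSub o' (trimOpe o s)
  | _, _, _, _, .base, o', .empty => rfl
  | _, _, _, _, .drop o, o', .snoc s t => trimOpe_wkSub o o' s
  | _, _, _, _, .keep o, o', .snoc s t => by
      simp [wkSub, trimOpe, trimOpe_wkSub o o' s]
  | _, _, _, _, .keepLock o, o', .lock s e => by
      simp [wkSub, trimOpe, trimOpe_wkSub o (factor e o').2.1 s]

theorem subst_wkTm : ∀ {Δ Δ' Γ : Cx} {A : Ty} (o : Ope Δ Δ') (s : Sub Γ Δ') (t : Tm Δ A),
    subst s (wkTm o t) = subst (trimOpe o s) t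
  | _, _, _, _, o, s, .var v => by
      simp only [subst, wkTm]; exact (substVar_trimOpe o s v).symm
  | _, _, _, _, o, s, .lam t => by
      simp only [wkTm, subst]
      rw [subst_wkTm (.keep o) (.snoc (wkSub (.drop (idOpe _)) s) (.var .zero)) t]
      simp only [trimOpe, trimOpe_wkSub]
  | _, _, _, _, o, s, .app t u => by
      simp [wkTm, subst, subst_wkTm o s t, subst_wkTm o s u]
  | _, _, _, _, o, s, .box t => by
      simp only [wkTm, subst]
      rw [subst_wkTm (.keepLock o) (.lock s .nil) t]
      simp only [trimOpe]
  | _, _, _, _, o, s, .unbox t e => by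
      simp only [wkTm, subst]
      rw [trimSub_trimOpe o s e,
        subst_wkTm (factor e o).2.1 (trimSub s (factor e o).2.2).2.1 t]
  | _, _, _, _, o, s, .lift k => by simp [wkTm, subst]
  | _, _, _, _, o, s, .mul t u => by
      simp [wkTm, subst, subst_wkTm o s t, subst_wkTm o s u]


/-- Composition of substitutions. -/
def compSub : {Γ Δ Θ : Cx} → Sub Γ Δ → Sub Δ Θ → Sub Γ Θ
  | _, _, _, _, .empty => .empty
  | _, _, _, σ, .snoc s t => .snoc (compSub σ s) (subst σ t)
  | _, _, _, σ, .lock s e => .lock (compSub (trimSub σ e).2.1 s) (trimSub σ e).2.2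

theorem substVar_comp : ∀ {Γ Δ Θ : Cx} {A : Ty} (σ : Sub Γ Δ) (s : Sub Δ Θ) (v : Var Θ A),
    substVar (compSub σ s) v = subst σ (substVar s v)
  | _, _, _, _, _, .snoc _ _, .zero => rfl
  | _, _, _, _, σ, .snoc s _, .succ v => substVar_comp σ s v

theorem trimSub_comp : ∀ {Γ Δ Θ Θ' : Cx} (σ : Sub Γ Δ) (s : Sub Δ Θ) (e : Ext Θ' Θ),
    trimSub (compSub σ s) e =
      ⟨_, compSub (trimSub σ (trimSub s e).2.2).2.1 (trimSub s e).2.1,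
        (trimSub σ (trimSub s e).2.2).2.2⟩
  | _, _, _, _, _, .lock _ _, .nil => rfl
  | _, _, _, _, σ, .snoc s _, .var e => trimSub_comp σ s e

theorem comp_wkSub_left : ∀ {Γ Γ' Δ Θ : Cx} (o : Ope Γ Γ') (σ : Sub Γ Δ) (s : Sub Δ Θ),
    compSub (wkSub o σ) s = wkSub o (compSub σ s)
  | _, _, _, _, _, _, .empty => rfl
  | _, _, _, _, o, σ, .snoc s t => by
      simp [compSub, wkSub, comp_wkSub_left o σ s, subst_wkSub]
  | _, _, _, _, o, σ, .lock s e => by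
      simp only [compSub, wkSub]
      rw [trimSub_wkSub o σ e,
        comp_wkSub_left (factor (trimSub σ e).2.2 o).2.1 (trimSub σ e).2.1 s]

theorem comp_wkSub_right : ∀ {Γ Δ Θ Θ' : Cx} (σ : Sub Γ Δ) (o : Ope Θ' Δ) (s : Sub Θ' Θ),
    compSub σ (wkSub o s) = compSub (trimOpe o σ) s
  | _, _, _, _, _, _, .empty => rfl
  | _, _, _, _, σ, o, .snoc s t => by
      simp [compSub, wkSub, comp_wkSub_right σ o s, subst_wkTm]
  | _, _, _, _, σ, o, .lock s e => by
      simp only [compSub, wkSub]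
      rw [trimSub_trimOpe o σ e,
        comp_wkSub_right (trimSub σ (factor e o).2.2).2.1 (factor e o).2.1 s]

theorem compSub_lift {Γ Δ Θ : Cx} {A : Ty} (σ : Sub Γ Δ) (s : Sub Δ Θ) :
    compSub (.snoc (wkSub (.drop (idOpe Γ)) σ) (.var (.zero (A := A))))
        (.snoc (wkSub (.drop (idOpe Δ)) s) (.var .zero)) =
      .snoc (wkSub (.drop (idOpe Γ)) (compSub σ s)) (.var .zero) := by
  simp only [compSub, subst, substVar, comp_wkSub_right, trimOpe, trimOpe_id, comp_wkSub_left]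

theorem subst_comp : ∀ {Γ Δ Θ : Cx} {A : Ty} (σ : Sub Γ Δ) (s : Sub Δ Θ) (t : Tm Θ A),
    subst (compSub σ s) t = subst σ (subst s t)
  | _, _, _, _, σ, s, .var v => by
      simp only [subst]; exact substVar_comp σ s v
  | _, _, _, _, σ, s, .lam t => by
      simp only [subst]
      rw [← subst_comp _ _ t, compSub_lift]
  | _, _, _, _, σ, s, .app t u => by
      simp [subst, subst_comp σ s t, subst_comp σ s u]
  | _, _, _, _, σ, s, .box t => by
      simp only [subst]
      rw [← subst_comp (.lock σ .nil) (.lock s .nil) t]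
      simp [compSub, trimSub_nil]
  | _, _, _, _, σ, s, .unbox t e => by
      simp only [subst]
      rw [trimSub_comp σ s e,
        subst_comp (trimSub σ (trimSub s e).2.2).2.1 (trimSub s e).2.1 t]
  | _, _, _, _, σ, s, .lift k => by simp [subst]
  | _, _, _, _, σ, s, .mul t u => by
      simp [subst, subst_comp σ s t, subst_comp σ s u]

theorem substVar_id : ∀ {Γ : Cx} {A : Ty} (v : Var Γ A), substVar (idSub Γ) v = .var v
  | _, _, .zero => rfl
  | _, _, .succ v => by
      simp only [idSub, substVar]
      rw [substVar_wkSub, substVar_id v]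
      simp [wkTm, wkVar, wkVar_id]

theorem trimSub_id : ∀ {Γ Δ : Cx} (e : Ext Δ Γ), trimSub (idSub Γ) e = ⟨Δ, idSub Δ, e⟩
  | _, _, .nil => rfl
  | _, _, .var e => by
      simp only [idSub]
      rw [trimSub_var, trimSub_wkSub _ _ e, trimSub_id e]
      rw [factor_drop e (idOpe _), factor_id e]
      simp [wkSub_id]

theorem subst_id : ∀ {Γ : Cx} {A : Ty} (t : Tm Γ A), subst (idSub Γ) t = t
  | _, _, .var v => by simp only [subst]; exact substVar_id v
  | _, _, .lam (A := A) t => by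
      simp only [subst]
      rw [show Sub.snoc (wkSub (.drop (idOpe _)) (idSub _)) (.var (.zero (A := A)))
            = idSub _ from rfl, subst_id t]
  | _, _, .app t u => by simp [subst, subst_id t, subst_id u]
  | _, _, .box t => by
      simp only [subst]
      rw [show Sub.lock (idSub _) .nil = idSub _ from rfl, subst_id t]
  | _, _, .unbox t e => by
      simp only [subst]
      rw [trimSub_id e, subst_id t]
  | _, _, .lift k => by simp [subst]
  | _, _, .mul t u => by simp [subst, subst_id t, subst_id u]

theorem comp_idL : ∀ {Γ Δ : Cx} (s : Sub Γ Δ), compSub (idSub Γ) s = s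
  | _, _, .empty => rfl
  | _, _, .snoc s t => by simp [compSub, comp_idL s, subst_id]
  | _, _, .lock s e => by
      simp only [compSub]
      rw [trimSub_id e, comp_idL s]

theorem comp_idR : ∀ {Γ Δ : Cx} (s : Sub Γ Δ), compSub s (idSub Δ) = s
  | _, _, .empty => rfl
  | _, _, .snoc s t => by
      simp only [idSub, compSub, subst, substVar]
      rw [comp_wkSub_right, trimOpe, trimOpe_id, comp_idR s]
  | _, _, .lock s e => by
      simp only [idSub, compSub, trimSub_nil]
      rw [comp_idR s]

theorem subst_trimOpe_id {Γ Γ' : Cx} {A : Ty} (o : Ope Γ Γ') (t : Tm Γ A) :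
    subst (trimOpe o (idSub Γ')) t = wkTm o t := by
  rw [← subst_wkTm o (idSub Γ') t, subst_id]

theorem comp_trimOpe_id : ∀ {Γ Γ' Δ : Cx} (o : Ope Γ Γ') (ρ : Sub Γ Δ),
    compSub (trimOpe o (idSub Γ')) ρ = wkSub o ρ
  | _, _, _, o, .empty => rfl
  | _, _, _, o, .snoc ρ t => by
      simp [compSub, wkSub, comp_trimOpe_id o ρ, subst_trimOpe_id]
  | _, _, _, o, .lock ρ e => by
      simp only [compSub, wkSub]
      rw [trimSub_trimOpe o (idSub _) e, trimSub_id (factor e o).2.2,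
        comp_trimOpe_id (factor e o).2.1 ρ]

theorem wkSub_id_trimOpe {Γ Γ' : Cx} (o : Ope Γ Γ') :
    wkSub o (idSub Γ) = trimOpe o (idSub Γ') := by
  rw [← comp_trimOpe_id o (idSub Γ), comp_idR]


theorem factorOpe_comp : ∀ {Δ Γ Γ' : Cx} (e : Ext Δ Γ) (o : Ope Γ Γ'),
    compOpe (factorOpe (factor e o).2.2) (.keepLock (factor e o).2.1) =
      compOpe o (factorOpe e)
  | _, _, _, e, .drop o => by
      rw [factor_drop e o]
      simp only [factorOpe, compOpe]
      rw [factorOpe_comp e o]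
  | _, _, _, .var e, .keep o => by
      rw [factor_keep e o]
      simp only [factorOpe, compOpe]
      rw [factorOpe_comp e o]
  | _, _, _, .nil, .keepLock o => by
      rw [factor_lock o]
      simp [factorOpe, idOpe, compOpe, compOpe_idL, compOpe_idR]

theorem factor_nil_factorOpe : ∀ {Δ Γ : Cx} (e : Ext Δ Γ),
    factor (.nil (Γ := Δ)) (factorOpe e) = ⟨Δ, idOpe Δ, e⟩
  | _, _, .nil => by
      simp only [factorOpe, idOpe]
      rw [factor_lock (idOpe _)]
  | _, _, .var e => by
      simp only [factorOpe]
      rw [factor_drop .nil (factorOpe e), factor_nil_factorOpe e]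

theorem unbox_wk {Δ Γ Γ' : Cx} {A : Ty} (o : Ope Δ Γ) (t : Tm Δ (.box A)) (e : Ext Γ Γ') :
    Tm.unbox (wkTm o t) e = wkTm (compOpe (factorOpe e) (.keepLock o)) (.unbox t .nil) := by
  simp only [wkTm]
  rw [factor_comp .nil (.keepLock o) (factorOpe e), factor_lock o, factor_nil_factorOpe e]
  simp [compOpe_idL]

theorem wkTm_conv {Γ : Cx} {A : Ty} {t u : Tm Γ A} (h : Conv t u) :
    ∀ {Γ' : Cx} (o : Ope Γ Γ'), Conv (wkTm o t) (wkTm o u) := by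
  induction h with
  | refl t => exact fun o => .refl _
  | symm _ ih => exact fun o => .symm (ih o)
  | trans _ _ ih₁ ih₂ => exact fun o => .trans (ih₁ o) (ih₂ o)
  | congLam _ ih => exact fun o => by simpa [wkTm] using Conv.congLam (ih (.keep o))
  | congApp _ _ ih₁ ih₂ => exact fun o => by simpa [wkTm] using Conv.congApp (ih₁ o) (ih₂ o)
  | congBox _ ih => exact fun o => by simpa [wkTm] using Conv.congBox (ih (.keepLock o))
  | congUnbox _ ih => exact fun o => by simp only [wkTm]; exact Conv.congUnbox (ih _)
  | congMul _ _ ih₁ ih₂ => exact fun o => by simpa [wkTm] using Conv.congMul (ih₁ o) (ih₂ o)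
  | betaFun t u =>
      intro Γ' o
      simp only [wkTm]
      have h := Conv.betaFun (wkTm (.keep o) t) (wkTm o u)
      rw [subst_wkTm (Ope.keep o) _ t] at h
      rw [← subst_wkSub o _ t]
      simp only [trimOpe, wkSub, wkSub_id_trimOpe] at h ⊢
      exact h
  | etaFun t =>
      intro Γ' o
      simp only [wkTm]
      have h := Conv.etaFun (wkTm o t)
      rw [← wkTm_comp] at h
      rw [← wkTm_comp]
      simp only [compOpe, compOpe_idL, compOpe_idR] at h ⊢
      simpa [wkVar] using h
  | betaBox t e =>
      intro Γ' o
      simp only [wkTm]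
      have h := Conv.betaBox (wkTm (.keepLock (factor e o).2.1) t) (factor e o).2.2
      rw [← wkTm_comp] at h
      rw [← wkTm_comp, ← factorOpe_comp e o]
      exact h
  | etaBox t =>
      intro Γ' o
      simp only [wkTm]
      rw [factor_lock o]
      exact Conv.etaBox (wkTm o t)
  | liftMul k₁ k₂ => exact fun o => by simpa [wkTm] using Conv.liftMul (Γ := _) k₁ k₂
  | zeroMul t => exact fun o => by simpa [wkTm] using Conv.zeroMul (wkTm o t)
  | oneMul t => exact fun o => by simpa [wkTm] using Conv.oneMul (wkTm o t)
  | mulLiftComm t k => exact fun o => by simpa [wkTm] using Conv.mulLiftComm (wkTm o t) k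
  | mulAssoc t u v => exact fun o => by simpa [wkTm] using Conv.mulAssoc (wkTm o t) (wkTm o u) (wkTm o v)
  | mulComm t u => exact fun o => by simpa [wkTm] using Conv.mulComm (wkTm o t) (wkTm o u)


/-- Binary Kripke logical relation expressing noninterference: arbitrary at
`nat` (the "secret" type), conversion-tracking at `box`. -/
def R : (A : Ty) → (Γ : Cx) → Tm Γ A → Tm Γ A → Prop
  | .base, _, t, t' => Conv t t'
  | .nat, _, _, _ => True
  | .arr A B, Γ, t, t' =>
      ∀ ⦃Γ' : Cx⦄ (o : Ope Γ Γ') ⦃u u' : Tm Γ' A⦄, R A Γ' u u' →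
        R B Γ' (.app (wkTm o t) u) (.app (wkTm o t') u')
  | .box A, Γ, t, t' =>
      Conv t t' ∧ ∀ ⦃Γ' : Cx⦄ (e : Ext Γ Γ'), R A Γ' (.unbox t e) (.unbox t' e)

theorem R_conv : ∀ {A : Ty} {Γ : Cx} {t t' s s' : Tm Γ A},
    Conv t s → Conv t' s' → R A Γ t t' → R A Γ s s'
  | .base, _, _, _, _, _ => fun h1 h2 h => (h1.symm.trans h).trans h2
  | .nat, _, _, _, _, _ => fun _ _ _ => trivial
  | .arr A B, _, _, _, _, _ => fun h1 h2 h => fun {Γ'} o {u u'} hu =>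
      R_conv (.congApp (wkTm_conv h1 o) (.refl _)) (.congApp (wkTm_conv h2 o) (.refl _))
        (h o hu)
  | .box A, _, _, _, _, _ => fun h1 h2 h =>
      ⟨(h1.symm.trans h.1).trans h2,
        fun _ e => R_conv (.congUnbox h1) (.congUnbox h2) (h.2 e)⟩

theorem R_wk : ∀ {A : Ty} {Γ Γ' : Cx} (o : Ope Γ Γ') {t t' : Tm Γ A},
    R A Γ t t' → R A Γ' (wkTm o t) (wkTm o t')
  | .base, _, _, o, _, _ => fun h => wkTm_conv h o
  | .nat, _, _, _, _, _ => fun _ => trivial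
  | .arr A B, _, _, o, t, t' => fun h => fun {Γ''} o' {u u'} hu => by
      rw [← wkTm_comp o' o t, ← wkTm_comp o' o t']
      exact h _ hu
  | .box A, _, _, o, t, t' => fun h =>
      ⟨wkTm_conv h.1 o, fun _ e => by
        rw [unbox_wk o t e, unbox_wk o t' e]
        exact R_wk _ (h.2 .nil)⟩

/-- Pointwise `R`-relatedness of substitutions. -/
inductive Rsub : {Γ Δ : Cx} → Sub Γ Δ → Sub Γ Δ → Prop
  | empty {Γ : Cx} : Rsub (Γ := Γ) .empty .empty
  | snoc {Γ Δ : Cx} {A : Ty} {s s' : Sub Γ Δ} {t t' : Tm Γ A} :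
      Rsub s s' → R A Γ t t' → Rsub (.snoc s t) (.snoc s' t')
  | lock {Γ Δ Θ : Cx} {s s' : Sub Θ Δ} {e : Ext Θ Γ} :
      Rsub s s' → Rsub (.lock s e) (.lock s' e)

/-- Pointwise `Conv`-relatedness of substitutions, allowing `R`-relatedness
behind locks. -/
inductive LSub : {Γ Δ : Cx} → Sub Γ Δ → Sub Γ Δ → Prop
  | empty {Γ : Cx} : LSub (Γ := Γ) .empty .empty
  | snoc {Γ Δ : Cx} {A : Ty} {s s' : Sub Γ Δ} {t t' : Tm Γ A} :
      LSub s s' → Conv t t' → LSub (.snoc s t) (.snoc s' t')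
  | lockR {Γ Δ Θ : Cx} {s s' : Sub Θ Δ} {e : Ext Θ Γ} :
      Rsub s s' → LSub (.lock s e) (.lock s' e)
  | lockL {Γ Δ Θ : Cx} {s s' : Sub Θ Δ} {e : Ext Θ Γ} :
      LSub s s' → LSub (.lock s e) (.lock s' e)

theorem Rsub_wk {Γ Δ : Cx} {s s' : Sub Γ Δ} (h : Rsub s s') :
    ∀ {Γ' : Cx} (o : Ope Γ Γ'), Rsub (wkSub o s) (wkSub o s') := by
  induction h with
  | empty => exact fun o => .empty
  | snoc hs ht ih => exact fun o => .snoc (ih o) (R_wk o ht)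
  | lock hs ih => exact fun o => .lock (ih _)

theorem LSub_wk {Γ Δ : Cx} {s s' : Sub Γ Δ} (h : LSub s s') :
    ∀ {Γ' : Cx} (o : Ope Γ Γ'), LSub (wkSub o s) (wkSub o s') := by
  induction h with
  | empty => exact fun o => .empty
  | snoc hs ht ih => exact fun o => .snoc (ih o) (wkTm_conv ht o)
  | lockR hs => exact fun o => .lockR (Rsub_wk hs _)
  | lockL hs ih => exact fun o => .lockL (ih _)

theorem Rsub_var {Γ Δ : Cx} {ρ ρ' : Sub Γ Δ} (h : Rsub ρ ρ') :
    ∀ {A : Ty} (v : Var Δ A), R A Γ (substVar ρ v) (substVar ρ' v) := by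
  induction h with
  | empty => intro A v; cases v
  | snoc hs ht ih =>
      intro A v
      cases v with
      | zero => exact ht
      | succ v => exact ih v
  | lock hs => intro A v; cases v

theorem LSub_var {Γ Δ : Cx} {σ σ' : Sub Γ Δ} (h : LSub σ σ') :
    ∀ {A : Ty} (v : Var Δ A), Conv (substVar σ v) (substVar σ' v) := by
  induction h with
  | empty => intro A v; cases v
  | snoc hs ht ih =>
      intro A v
      cases v with
      | zero => exact ht
      | succ v => exact ih v
  | lockR hs => intro A v; cases v
  | lockL hs => intro A v; cases v

/-- Relatedness of trimming results (for `Rsub`). -/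
inductive TrimR (Γ Θ : Cx) :
    ((Θ' : Cx) × Sub Θ' Θ × Ext Θ' Γ) → ((Θ' : Cx) × Sub Θ' Θ × Ext Θ' Γ) → Prop
  | mk {Θ' : Cx} {s s' : Sub Θ' Θ} {e : Ext Θ' Γ} :
      Rsub s s' → TrimR Γ Θ ⟨Θ', s, e⟩ ⟨Θ', s', e⟩

/-- Relatedness of trimming results (for `LSub`). -/
inductive TrimL (Γ Θ : Cx) :
    ((Θ' : Cx) × Sub Θ' Θ × Ext Θ' Γ) → ((Θ' : Cx) × Sub Θ' Θ × Ext Θ' Γ) → Prop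
  | mkR {Θ' : Cx} {s s' : Sub Θ' Θ} {e : Ext Θ' Γ} :
      Rsub s s' → TrimL Γ Θ ⟨Θ', s, e⟩ ⟨Θ', s', e⟩
  | mkL {Θ' : Cx} {s s' : Sub Θ' Θ} {e : Ext Θ' Γ} :
      LSub s s' → TrimL Γ Θ ⟨Θ', s, e⟩ ⟨Θ', s', e⟩

theorem trim_Rsub {Γ Δ : Cx} {ρ ρ' : Sub Γ Δ} (h : Rsub ρ ρ') :
    ∀ {Θ : Cx} (e : Ext Θ Δ), TrimR Γ Θ (trimSub ρ e) (trimSub ρ' e) := by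
  induction h with
  | empty => intro Θ e; cases e
  | snoc hs ht ih =>
      intro Θ e
      cases e with
      | var e => exact ih e
  | lock hs =>
      intro Θ e
      cases e with
      | nil => exact .mk hs

theorem trim_LSub {Γ Δ : Cx} {σ σ' : Sub Γ Δ} (h : LSub σ σ') :
    ∀ {Θ : Cx} (e : Ext Θ Δ), TrimL Γ Θ (trimSub σ e) (trimSub σ' e) := by
  induction h with
  | empty => intro Θ e; cases e
  | snoc hs ht ih =>
      intro Θ e
      cases e with
      | var e => exact ih e
  | lockR hs =>
      intro Θ e
      cases e with
      | nil => exact .mkR hs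
  | lockL hs =>
      intro Θ e
      cases e with
      | nil => exact .mkL hs

/-- Fundamental lemma of the logical relation, proved jointly with
`Conv`-congruence of substitution in `LSub`-related substitutions. -/
theorem fundamental : ∀ {Δ : Cx} {A : Ty} (t : Tm Δ A),
    (∀ {Γ : Cx} {ρ ρ' : Sub Γ Δ}, Rsub ρ ρ' → R A Γ (subst ρ t) (subst ρ' t)) ∧
    (∀ {Γ : Cx} {σ σ' : Sub Γ Δ}, LSub σ σ' → Conv (subst σ t) (subst σ' t))
  | _, _, .var v => by
      constructor
      · intro Γ ρ ρ' hρ; simp only [subst]; exact Rsub_var hρ v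
      · intro Γ σ σ' hσ; simp only [subst]; exact LSub_var hσ v
  | _, _, .lam t => by
      constructor
      · intro Γ ρ ρ' hρ
        intro Γ' o u u' hu
        have key : ∀ (σ : Sub Γ _) (w : Tm Γ' _),
            subst (.snoc (idSub Γ') w) (wkTm (.keep o)
              (subst (.snoc (wkSub (.drop (idOpe _)) σ) (.var .zero)) t))
            = subst (.snoc (wkSub o σ) w) t := by
          intro σ w
          rw [subst_wkTm]
          simp only [trimOpe]
          rw [← subst_comp]
          simp only [compSub, comp_wkSub_right, trimOpe, trimOpe_id, comp_trimOpe_id,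
            subst, substVar]
        have h1 := Conv.betaFun (wkTm (.keep o)
          (subst (.snoc (wkSub (.drop (idOpe _)) ρ) (.var .zero)) t)) u
        have h2 := Conv.betaFun (wkTm (.keep o)
          (subst (.snoc (wkSub (.drop (idOpe _)) ρ') (.var .zero)) t)) u'
        rw [key ρ u] at h1
        rw [key ρ' u'] at h2
        have hr := (fundamental t).1 (Rsub.snoc (Rsub_wk hρ o) hu)
        simp only [subst, wkTm]
        exact R_conv h1.symm h2.symm hr
      · intro Γ σ σ' hσ
        simp only [subst]
        exact .congLam ((fundamental t).2 (LSub.snoc (LSub_wk hσ _) (.refl _)))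
  | _, _, .app t u => by
      constructor
      · intro Γ ρ ρ' hρ
        have h := ((fundamental t).1 hρ) (idOpe _) ((fundamental u).1 hρ)
        rw [wkTm_id, wkTm_id] at h
        simp only [subst]
        exact h
      · intro Γ σ σ' hσ
        simp only [subst]
        exact .congApp ((fundamental t).2 hσ) ((fundamental u).2 hσ)
  | _, _, .box t => by
      constructor
      · intro Γ ρ ρ' hρ
        simp only [subst]
        refine ⟨Conv.congBox ((fundamental t).2 (LSub.lockR (e := .nil) hρ)), fun _ e => ?_⟩
        have hr := R_wk (factorOpe e) ((fundamental t).1 (Rsub.lock (e := .nil) hρ))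
        exact R_conv (Conv.symm (Conv.betaBox (subst (Sub.lock ρ .nil) t) e))
          (Conv.symm (Conv.betaBox (subst (Sub.lock ρ' .nil) t) e)) hr
      · intro Γ σ σ' hσ
        simp only [subst]
        exact .congBox ((fundamental t).2 (LSub.lockL (e := .nil) hσ))
  | _, _, .unbox t e => by
      constructor
      · intro Γ ρ ρ' hρ
        simp only [subst]
        have htr := trim_Rsub hρ e
        revert htr
        generalize trimSub ρ e = a
        generalize trimSub ρ' e = b
        rintro ⟨hs⟩
        exact ((fundamental t).1 hs).2 _
      · intro Γ σ σ' hσ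
        simp only [subst]
        have htr := trim_LSub hσ e
        revert htr
        generalize trimSub σ e = a
        generalize trimSub σ' e = b
        rintro (⟨hs⟩ | ⟨hs⟩)
        · exact .congUnbox ((fundamental t).1 hs).1
        · exact .congUnbox ((fundamental t).2 hs)
  | _, _, .lift k => by
      constructor
      · intro Γ ρ ρ' hρ; exact trivial
      · intro Γ σ σ' hσ; simp only [subst]; exact .refl _
  | _, _, .mul t u => by
      constructor
      · intro Γ ρ ρ' hρ; exact trivial
      · intro Γ σ σ' hσ
        simp only [subst]
        exact .congMul ((fundamental t).2 hσ) ((fundamental u).2 hσ)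

/-- Binding-time correctness for IKC^Nat: every closed term
f : Nat ⟶ □Nat is constant up to ≈, i.e. app(f, u₁) ≈ app(f, u₂) for any two
closed arguments u₁, u₂ : Nat. -/
theorem binding_time_correctness (f : Tm .nil (.arr .nat (.box .nat)))
    (u₁ u₂ : Tm .nil .nat) : Conv (.app f u₁) (.app f u₂) := by
  have h : R (.arr .nat (.box .nat)) .nil f f := by
    have h0 := (fundamental f).1 (Rsub.empty (Γ := .nil))
    rwa [show subst (Sub.empty) f = f from subst_id f] at h0
  have h2 := h .base (u := u₁) (u' := u₂) trivial
  rw [show wkTm .base f = f from wkTm_id f] at h2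
  exact h2.1

end IKC
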